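/- For every t ∈ ℝ, the quantity σ_j^{−2} ∫_ℝ e^{i·2^j t·λ} f_G(λ) |ψ̂(2^j λ)|² dλ is real and converges, as j → ∞, to ρ(t) = (∫_ℝ |ψ̂(η)|² |η|^{β−1} dη)^{−1} ∫_ℝ e^{itζ} |ψ̂(ζ)|² |ζ|^{β−1} dζ. -/

import Mathlib

open MeasureTheory Filter Set

section auxlemmas

lemma aux_even_integrable {f : ℝ → ℝ} (he : ∀ x, f (-x) = f x)
    (hf : IntegrableOn f (Ioi 0)) : Integrable f := by
  have int_Iic : IntegrableOn f (Iic 0) := by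
    rw [IntegrableOn, ← Measure.map_neg_eq_self (volume : Measure ℝ)]
    have m : MeasurableEmbedding fun x : ℝ => -x := (Homeomorph.neg ℝ).measurableEmbedding
    rw [m.restrict_map, m.integrable_map_iff]
    simp_rw [Function.comp_def, he, neg_preimage, neg_Iic, neg_zero]
    exact (integrableOn_Ici_iff_integrableOn_Ioi).mpr hf
  rw [← integrableOn_univ, ← Set.Iic_union_Ioi (a := (0:ℝ)), integrableOn_union]
  exact ⟨int_Iic, hf⟩

lemma aux_rpow_exp_integrable {s b : ℝ} (hs : -1 < s) (hb : 0 < b) :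
    Integrable (fun x : ℝ => |x| ^ s * Real.exp (-b * |x|)) := by
  apply aux_even_integrable (fun x => by rw [abs_neg])
  have := integrableOn_rpow_mul_exp_neg_mul_rpow hs one_pos hb
  apply this.congr_fun _ measurableSet_Ioi
  intro x hx
  simp only [abs_of_pos (mem_Ioi.mp hx), Real.rpow_one]

lemma aux_rpow_exp_bound {s b : ℝ} (hs : 0 ≤ s) (hb : 0 < b) :
    ∃ B : ℝ, 1 ≤ B ∧ ∀ x : ℝ, |x| ^ s * Real.exp (-b * |x|) ≤ B := by
  have ht := tendsto_rpow_mul_exp_neg_mul_atTop_nhds_zero s b hb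
  have h1 : ∀ᶠ x : ℝ in atTop, x ^ s * Real.exp (-b * x) < 1 :=
    ht.eventually_lt_const one_pos
  obtain ⟨A, hA⟩ := eventually_atTop.mp h1
  have hg : Continuous fun x : ℝ => x ^ s * Real.exp (-b * x) :=
    (continuous_id.rpow_const fun x => Or.inr hs).mul
      (Real.continuous_exp.comp (continuous_const.mul continuous_id))
  obtain ⟨C, hC⟩ := (isCompact_Icc (a := (0:ℝ)) (b := A)).exists_bound_of_continuousOn
    hg.continuousOn
  refine ⟨max C 1, le_max_right _ _, fun x => ?_⟩
  rcases le_or_gt (|x|) A with hxa | hxa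
  · have := hC (|x|) ⟨abs_nonneg x, hxa⟩
    calc |x| ^ s * Real.exp (-b * |x|) ≤ ‖|x| ^ s * Real.exp (-b * |x|)‖ := le_abs_self _
    _ ≤ C := this
    _ ≤ max C 1 := le_max_left _ _
  · exact le_trans (hA (|x|) hxa.le).le (le_max_right _ _)

lemma aux_ae_ne_zero : ∀ᵐ ζ : ℝ, ζ ≠ (0:ℝ) := by
  rw [ae_iff]
  convert Real.volume_singleton (a := (0:ℝ)) using 2
  ext x; simp

lemma aux_scale_real (β : ℝ) (C_G f_G F : ℝ → ℝ)
    (hfG : ∀ x : ℝ, x ≠ 0 → f_G x = C_G x * |x| ^ (β-1)) (a : ℝ) (ha : 0 < a) :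
    ∫ l : ℝ, f_G l * F (a * l)
      = (a⁻¹ * a⁻¹ ^ (β-1)) * ∫ ζ : ℝ, C_G (a⁻¹ * ζ) * (F ζ * |ζ| ^ (β-1)) := by
  have h1 : (fun l : ℝ => f_G l * F (a*l))
      = fun l => (fun ζ => f_G (a⁻¹*ζ) * F ζ) (a*l) := by
    funext l; simp [inv_mul_cancel_left₀ (ne_of_gt ha)]
  rw [h1, MeasureTheory.Measure.integral_comp_mul_left (fun ζ : ℝ => f_G (a⁻¹*ζ) * F ζ) a]
  rw [abs_of_pos (inv_pos.mpr ha), smul_eq_mul]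
  have h2 : ∫ ζ : ℝ, f_G (a⁻¹*ζ) * F ζ
      = ∫ ζ : ℝ, a⁻¹ ^ (β-1) * (C_G (a⁻¹*ζ) * (F ζ * |ζ| ^ (β-1))) := by
    apply integral_congr_ae
    filter_upwards [aux_ae_ne_zero] with ζ hζ
    have hz : a⁻¹*ζ ≠ 0 := mul_ne_zero (inv_ne_zero (ne_of_gt ha)) hζ
    rw [hfG _ hz, abs_mul, abs_of_pos (inv_pos.mpr ha),
      Real.mul_rpow (inv_pos.mpr ha).le (abs_nonneg ζ)]
    ring
  rw [h2, integral_const_mul]; ring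

lemma aux_scale_complex (β : ℝ) (C_G f_G F : ℝ → ℝ)
    (hfG : ∀ x : ℝ, x ≠ 0 → f_G x = C_G x * |x| ^ (β-1)) (s t : ℝ) (hs : 0 < s) :
    ∫ l : ℝ, Complex.exp (Complex.I * ((s * t * l : ℝ) : ℂ)) * ((f_G l * F (s*l) : ℝ) : ℂ)
      = ((s⁻¹ * s⁻¹ ^ (β-1) : ℝ) : ℂ) *
        ∫ ζ : ℝ, Complex.exp (Complex.I * (t : ℂ) * (ζ : ℂ)) *
          ((C_G (s⁻¹ * ζ) * (F ζ * |ζ| ^ (β-1)) : ℝ) : ℂ) := by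
  have h1 : (fun l : ℝ => Complex.exp (Complex.I * ((s * t * l : ℝ) : ℂ)) *
        ((f_G l * F (s*l) : ℝ) : ℂ))
      = fun l => (fun ζ : ℝ => Complex.exp (Complex.I * (t : ℂ) * (ζ : ℂ)) *
        ((f_G (s⁻¹*ζ) * F ζ : ℝ) : ℂ)) (s*l) := by
    funext l
    simp only []
    rw [inv_mul_cancel_left₀ (ne_of_gt hs)]
    congr 1
    push_cast
    ring
  rw [h1, MeasureTheory.Measure.integral_comp_mul_left
    (fun ζ : ℝ => Complex.exp (Complex.I * (t : ℂ) * (ζ : ℂ)) * ((f_G (s⁻¹*ζ) * F ζ : ℝ) : ℂ)) s]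
  rw [abs_of_pos (inv_pos.mpr hs), Complex.real_smul]
  have h2 : ∫ ζ : ℝ, Complex.exp (Complex.I * (t : ℂ) * (ζ : ℂ)) * ((f_G (s⁻¹*ζ) * F ζ : ℝ) : ℂ)
      = ∫ ζ : ℝ, ((s⁻¹ ^ (β-1) : ℝ) : ℂ) * (Complex.exp (Complex.I * (t : ℂ) * (ζ : ℂ)) *
          ((C_G (s⁻¹ * ζ) * (F ζ * |ζ| ^ (β-1)) : ℝ) : ℂ)) := by
    apply integral_congr_ae
    filter_upwards [aux_ae_ne_zero] with ζ hζ
    have hz : s⁻¹*ζ ≠ 0 := mul_ne_zero (inv_ne_zero (ne_of_gt hs)) hζ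
    rw [hfG _ hz, abs_mul, abs_of_pos (inv_pos.mpr hs),
      Real.mul_rpow (inv_pos.mpr hs).le (abs_nonneg ζ)]
    push_cast
    ring
  rw [h2, integral_const_mul]
  push_cast
  ring

lemma aux_cancel (c D : ℝ) (E : ℂ) (hc : c ≠ 0) :
    (((c * D)⁻¹ : ℝ) : ℂ) * (((c : ℝ) : ℂ) * E) = (((D : ℝ) : ℂ))⁻¹ * E := by
  push_cast
  rw [mul_inv, mul_comm ((c:ℂ))⁻¹ ((D:ℂ))⁻¹, mul_assoc,
    ← mul_assoc ((c:ℂ))⁻¹ (c:ℂ) E, inv_mul_cancel₀ (by exact_mod_cast hc), one_mul]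

lemma aux_im_zero (θ : ℝ) (g : ℝ → ℝ)
    (hci : Integrable (fun l : ℝ => Complex.exp (Complex.I * ((θ * l : ℝ) : ℂ)) * ((g l : ℝ) : ℂ)))
    (hg_even : ∀ᵐ l : ℝ, g (-l) = g l) :
    (∫ l : ℝ, Complex.exp (Complex.I * ((θ * l : ℝ) : ℂ)) * ((g l : ℝ) : ℂ)).im = 0 := by
  have him : ∀ l : ℝ, (Complex.exp (Complex.I * ((θ * l : ℝ) : ℂ)) * ((g l : ℝ) : ℂ)).im
      = Real.sin (θ * l) * g l := by
    intro l
    simp [Complex.exp_im, Complex.exp_re, Complex.mul_re, Complex.mul_im]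
  have h1 := integral_im (𝕜 := ℂ) hci
  simp only [RCLike.im_to_complex] at h1
  rw [← h1]
  simp only [him]
  have h2 : ∫ l : ℝ, Real.sin (θ * l) * g l
      = ∫ l : ℝ, Real.sin (θ * (-l)) * g (-l) :=
    (integral_neg_eq_self (fun l => Real.sin (θ * l) * g l) volume).symm
  have h3 : ∫ l : ℝ, Real.sin (θ * (-l)) * g (-l)
      = ∫ l : ℝ, -(Real.sin (θ * l) * g l) := by
    apply integral_congr_ae
    filter_upwards [hg_even] with l hl
    rw [hl, mul_neg, Real.sin_neg]
    ring
  rw [h3, integral_neg] at h2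
  linarith

lemma aux_inv_pow_tendsto (ζ : ℝ) :
    Tendsto (fun j : ℕ => ((2:ℝ) ^ j)⁻¹ * ζ) atTop (nhds 0) := by
  have h1 : Tendsto (fun j : ℕ => ((2:ℝ) ^ j)⁻¹) atTop (nhds 0) :=
    tendsto_inv_atTop_zero.comp (tendsto_pow_atTop_atTop_of_one_lt one_lt_two)
  simpa using h1.mul_const ζ

lemma aux_tendsto_real (C_G : ℝ → ℝ) (hCG_cont : Continuous C_G)
    (hCG_nonneg : ∀ x, 0 ≤ C_G x) (M : ℝ) (hM : ∀ x, C_G x ≤ M)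
    (h : ℝ → ℝ) (hh_nonneg : ∀ x, 0 ≤ h x) (hh_cont : Continuous h)
    (hh_int : Integrable h) :
    Tendsto (fun j : ℕ => ∫ ζ : ℝ, C_G (((2:ℝ) ^ j)⁻¹ * ζ) * h ζ) atTop
      (nhds (C_G 0 * ∫ ζ : ℝ, h ζ)) := by
  rw [← integral_const_mul]
  apply tendsto_integral_of_dominated_convergence (bound := fun ζ => M * h ζ)
  · intro j
    exact ((hCG_cont.comp (continuous_const.mul continuous_id)).mul hh_cont).aestronglyMeasurable
  · exact hh_int.const_mul M
  · intro j
    filter_upwards with ζ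
    rw [Real.norm_of_nonneg (mul_nonneg (hCG_nonneg _) (hh_nonneg _))]
    exact mul_le_mul_of_nonneg_right (hM _) (hh_nonneg _)
  · filter_upwards with ζ
    exact ((hCG_cont.continuousAt.tendsto).comp (aux_inv_pow_tendsto ζ)).mul_const _

lemma aux_tendsto_complex (C_G : ℝ → ℝ) (hCG_cont : Continuous C_G)
    (hCG_nonneg : ∀ x, 0 ≤ C_G x) (M : ℝ) (hM : ∀ x, C_G x ≤ M)
    (h : ℝ → ℝ) (hh_nonneg : ∀ x, 0 ≤ h x) (hh_cont : Continuous h)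
    (hh_int : Integrable h) (t : ℝ) :
    Tendsto (fun j : ℕ => ∫ ζ : ℝ, Complex.exp (Complex.I * (t:ℂ) * (ζ:ℂ)) *
        ((C_G (((2:ℝ) ^ j)⁻¹ * ζ) * h ζ : ℝ) : ℂ)) atTop
      (nhds (((C_G 0 : ℝ) : ℂ) * ∫ ζ : ℝ, Complex.exp (Complex.I * (t:ℂ) * (ζ:ℂ)) *
        ((h ζ : ℝ) : ℂ))) := by
  have hexp : ∀ ζ : ℝ, ‖Complex.exp (Complex.I * (t:ℂ) * (ζ:ℂ))‖ = 1 := by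
    intro ζ
    rw [Complex.norm_exp]
    norm_num [Complex.mul_re, Complex.mul_im]
  have hpull : ∀ ζ : ℝ, Complex.exp (Complex.I * (t:ℂ) * (ζ:ℂ)) * ((C_G 0 * h ζ : ℝ) : ℂ)
      = ((C_G 0 : ℝ) : ℂ) * (Complex.exp (Complex.I * (t:ℂ) * (ζ:ℂ)) * ((h ζ : ℝ) : ℂ)) := by
    intro ζ; push_cast; ring
  rw [← integral_const_mul]
  simp_rw [← hpull]
  apply tendsto_integral_of_dominated_convergence (bound := fun ζ => M * h ζ)
  · intro j
    apply Continuous.aestronglyMeasurable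
    apply Continuous.mul
    · exact Complex.continuous_exp.comp ((continuous_const).mul Complex.continuous_ofReal)
    · exact Complex.continuous_ofReal.comp
        ((hCG_cont.comp (continuous_const.mul continuous_id)).mul hh_cont)
  · exact hh_int.const_mul M
  · intro j
    filter_upwards with ζ
    rw [norm_mul, hexp, one_mul, Complex.norm_real,
      Real.norm_of_nonneg (mul_nonneg (hCG_nonneg _) (hh_nonneg _))]
    exact mul_le_mul_of_nonneg_right (hM _) (hh_nonneg _)
  · filter_upwards with ζ
    apply Tendsto.const_mul
    apply Tendsto.comp (Complex.continuous_ofReal.tendsto _)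
    exact ((hCG_cont.continuousAt.tendsto).comp (aux_inv_pow_tendsto ζ)).mul_const _

end auxlemmas

/-- Fourier transform `ψ̂(λ) = ∫ e^{-iλt} ψ(t) dt`. -/
noncomputable def fhat (ψ : ℝ → ℝ) (l : ℝ) : ℂ :=
  ∫ t : ℝ, Complex.exp (-(Complex.I * (l : ℂ) * (t : ℂ))) * (ψ t : ℂ)

theorem stmt_9
    (β : ℝ) (hβ : β ∈ Set.Ioo (0 : ℝ) 1)
    (C_G : ℝ → ℝ) (hCG_cont : Continuous C_G) (hCG_bdd : ∃ M : ℝ, ∀ x, C_G x ≤ M)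
    (hCG_nonneg : ∀ x, 0 ≤ C_G x) (hCG_even : ∀ x, C_G (-x) = C_G x)
    (hCG0 : 0 < C_G 0)
    (f_G : ℝ → ℝ) (hfG_nonneg : ∀ x, 0 ≤ f_G x)
    (hfG : ∀ x : ℝ, x ≠ 0 → f_G x = C_G x * |x| ^ (β - 1))
    (hfG_int : Integrable f_G)
    (ψ : ℝ → ℝ) (hψ_int : Integrable ψ) (hψ_sq : Integrable (fun t => (ψ t) ^ 2))
    (hψ_zero : (∫ t : ℝ, ψ t) = 0)
    (α K κ : ℝ) (hα : 1 ≤ α) (hK : 0 < K) (hκ : 0 < κ)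
    (Cψ : ℝ → ℂ) (hCψ_cont : Continuous Cψ)
    (hCψ0 : 0 < (Cψ 0).re ∧ (Cψ 0).im = 0)
    (hCψ_bdd : ∀ l : ℝ, ‖Cψ l‖ ≤ K * Real.exp (-κ * |l|))
    (hhat : ∀ l : ℝ, fhat ψ l = Cψ l * ((|l| ^ α : ℝ) : ℂ))
    (sigma2 : ℕ → ℝ)
    (hsigma2 : ∀ j : ℕ, sigma2 j =
      ∫ l : ℝ, f_G l * ‖fhat ψ ((2 : ℝ) ^ j * l)‖ ^ 2)
    (Q : ℕ → ℝ → ℂ)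
    (hQ : ∀ j : ℕ, ∀ t : ℝ, Q j t =
      (((sigma2 j)⁻¹ : ℝ) : ℂ) *
        ∫ l : ℝ, Complex.exp (Complex.I * (((2 : ℝ) ^ j * t * l : ℝ) : ℂ)) *
          ((f_G l * ‖fhat ψ ((2 : ℝ) ^ j * l)‖ ^ 2 : ℝ) : ℂ))
    (ρ : ℝ → ℂ)
    (hρ : ∀ t : ℝ, ρ t =
      (((∫ η : ℝ, ‖fhat ψ η‖ ^ 2 * |η| ^ (β - 1)) : ℝ) : ℂ)⁻¹ *
        ∫ ζ : ℝ, Complex.exp (Complex.I * (t : ℂ) * (ζ : ℂ)) *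
          ((‖fhat ψ ζ‖ ^ 2 * |ζ| ^ (β - 1) : ℝ) : ℂ)) :
    ∀ t : ℝ, (∀ j : ℕ, (Q j t).im = 0) ∧
      Tendsto (fun j : ℕ => Q j t) atTop (nhds (ρ t)) := by
  obtain ⟨hβ0, hβ1⟩ := hβ
  obtain ⟨M, hM⟩ := hCG_bdd
  have h2j_pos : ∀ j : ℕ, (0:ℝ) < 2 ^ j := fun j => pow_pos two_pos j
  have hα0 : (0:ℝ) < α := lt_of_lt_of_le one_pos hα
  have hp_pos : 0 < α + α + (β - 1) := by linarith
  -- algebraic identities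
  have habs : ∀ l : ℝ, ‖fhat ψ l‖ = ‖Cψ l‖ * |l| ^ α := by
    intro l
    rw [hhat l, norm_mul, Complex.norm_real, Real.norm_eq_abs,
      abs_of_nonneg (Real.rpow_nonneg (abs_nonneg l) α)]
  have hF_eq : ∀ ζ : ℝ, ‖fhat ψ ζ‖ ^ 2
      = ‖Cψ ζ‖ ^ 2 * |ζ| ^ (α + α) := by
    intro ζ
    rw [habs ζ, mul_pow, Real.rpow_add' (abs_nonneg ζ) (by linarith), sq, sq]
  have hh_eq : ∀ ζ : ℝ, ‖fhat ψ ζ‖ ^ 2 * |ζ| ^ (β - 1)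
      = ‖Cψ ζ‖ ^ 2 * |ζ| ^ (α + α + (β - 1)) := by
    intro ζ
    rcases eq_or_ne ζ 0 with rfl | hz
    · rw [abs_zero, Real.zero_rpow (by linarith : β - 1 ≠ 0),
        Real.zero_rpow (ne_of_gt hp_pos)]
      ring
    · rw [hF_eq ζ, mul_assoc, ← Real.rpow_add (abs_pos.mpr hz)]
  have hh_nonneg : ∀ ζ : ℝ, 0 ≤ ‖fhat ψ ζ‖ ^ 2 * |ζ| ^ (β - 1) := by
    intro ζ; positivity
  have hh_cont : Continuous fun ζ : ℝ => ‖fhat ψ ζ‖ ^ 2 * |ζ| ^ (β - 1) := by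
    have : (fun ζ : ℝ => ‖fhat ψ ζ‖ ^ 2 * |ζ| ^ (β - 1))
        = fun ζ => ‖Cψ ζ‖ ^ 2 * |ζ| ^ (α + α + (β - 1)) := funext hh_eq
    rw [this]
    exact ((continuous_norm.comp hCψ_cont).pow 2).mul
      (continuous_abs.rpow_const fun x => Or.inr hp_pos.le)
  have hF_cont : Continuous fun ζ : ℝ => ‖fhat ψ ζ‖ ^ 2 := by
    have : (fun ζ : ℝ => ‖fhat ψ ζ‖ ^ 2)
        = fun ζ => ‖Cψ ζ‖ ^ 2 * |ζ| ^ (α + α) := funext hF_eq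
    rw [this]
    exact ((continuous_norm.comp hCψ_cont).pow 2).mul
      (continuous_abs.rpow_const fun x => Or.inr (by linarith))
  -- bound on F
  obtain ⟨B, hB1, hBle⟩ := aux_rpow_exp_bound (s := α + α) (b := 2 * κ)
    (by linarith) (by linarith)
  have hexp_sq : ∀ x : ℝ, (Real.exp (-κ * |x|)) ^ 2 = Real.exp (-(2*κ) * |x|) := by
    intro x; rw [sq, ← Real.exp_add]; ring_nf
  have hCψsq : ∀ x : ℝ, ‖Cψ x‖ ^ 2 ≤ K ^ 2 * Real.exp (-(2*κ) * |x|) := by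
    intro x
    calc ‖Cψ x‖ ^ 2 ≤ (K * Real.exp (-κ * |x|)) ^ 2 :=
          pow_le_pow_left₀ (norm_nonneg _) (hCψ_bdd x) 2
    _ = K ^ 2 * Real.exp (-(2*κ) * |x|) := by rw [mul_pow, hexp_sq]
  have hF_bd : ∀ ζ : ℝ, ‖fhat ψ ζ‖ ^ 2 ≤ K ^ 2 * B := by
    intro ζ
    rw [hF_eq ζ]
    calc ‖Cψ ζ‖ ^ 2 * |ζ| ^ (α + α)
        ≤ (K ^ 2 * Real.exp (-(2*κ) * |ζ|)) * |ζ| ^ (α + α) :=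
          mul_le_mul_of_nonneg_right (hCψsq ζ) (Real.rpow_nonneg (abs_nonneg ζ) _)
    _ = K ^ 2 * (|ζ| ^ (α + α) * Real.exp (-(2*κ) * |ζ|)) := by ring
    _ ≤ K ^ 2 * B := mul_le_mul_of_nonneg_left (hBle ζ) (by positivity)
  have hB0_pos : (0:ℝ) < K ^ 2 * B := by positivity
  -- integrability of h
  have hh_int : Integrable fun ζ : ℝ => ‖fhat ψ ζ‖ ^ 2 * |ζ| ^ (β - 1) := by
    apply Integrable.mono'
      ((aux_rpow_exp_integrable (s := α + α + (β - 1)) (b := 2 * κ)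
        (by linarith) (by linarith)).const_mul (K ^ 2))
      hh_cont.aestronglyMeasurable
    filter_upwards with x
    rw [Real.norm_of_nonneg (hh_nonneg x), hh_eq x]
    calc ‖Cψ x‖ ^ 2 * |x| ^ (α + α + (β - 1))
        ≤ (K ^ 2 * Real.exp (-(2*κ) * |x|)) * |x| ^ (α + α + (β - 1)) :=
          mul_le_mul_of_nonneg_right (hCψsq x) (Real.rpow_nonneg (abs_nonneg x) _)
    _ = K ^ 2 * (|x| ^ (α + α + (β - 1)) * Real.exp (-(2*κ) * |x|)) := by ring
  -- positivity of ∫ h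
  have hIh_pos : 0 < ∫ ζ : ℝ, ‖fhat ψ ζ‖ ^ 2 * |ζ| ^ (β - 1) := by
    have hCψ0ne : Cψ 0 ≠ 0 := by
      intro hc; rw [hc] at hCψ0; simp at hCψ0
    have hev : ∀ᶠ x in nhds (0:ℝ), Cψ x ≠ 0 :=
      hCψ_cont.continuousAt.eventually_ne hCψ0ne
    obtain ⟨ε, hε, hball⟩ := Metric.eventually_nhds_iff.mp hev
    have hζ₀pos : 0 < ‖fhat ψ (ε/2)‖ ^ 2 * |ε/2| ^ (β - 1) := by
      rw [hh_eq]
      have h1 : Cψ (ε/2) ≠ 0 := hball (by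
        rw [Real.dist_eq, sub_zero, abs_of_pos (half_pos hε)]; linarith)
      have h2 : (0:ℝ) < |ε/2| := abs_pos.mpr (ne_of_gt (half_pos hε))
      have := norm_pos_iff.mpr h1
      positivity
    have hev2 : ∀ᶠ y in nhds (ε/2),
        ‖fhat ψ y‖ ^ 2 * |y| ^ (β - 1) ≠ 0 :=
      hh_cont.continuousAt.eventually_ne (ne_of_gt hζ₀pos)
    obtain ⟨r, hr, hr2⟩ := Metric.eventually_nhds_iff.mp hev2
    rw [integral_pos_iff_support_of_nonneg hh_nonneg hh_int]
    calc (0:ENNReal) < volume (Metric.ball (ε/2) r) := Metric.measure_ball_pos _ _ hr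
    _ ≤ volume (Function.support fun ζ : ℝ => ‖fhat ψ ζ‖ ^ 2 * |ζ| ^ (β - 1)) :=
        measure_mono fun y hy => hr2 (Metric.mem_ball.mp hy)
  -- evenness
  have hconj : ∀ l : ℝ, fhat ψ (-l) = (starRingEnd ℂ) (fhat ψ l) := by
    intro l
    unfold fhat
    rw [← integral_conj]
    congr 1
    funext u
    rw [map_mul, ← Complex.exp_conj]
    congr 1
    · congr 1
      simp only [map_neg, map_mul, Complex.conj_I, Complex.conj_ofReal]
      push_cast
      ring
    · exact (Complex.conj_ofReal _).symm
  have habs_even : ∀ x : ℝ, ‖fhat ψ (-x)‖ = ‖fhat ψ x‖ := by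
    intro x; rw [hconj x, Complex.norm_conj]
  intro t
  -- key rewriting of Q
  have key1 : ∀ j : ℕ, sigma2 j = (((2:ℝ)^j)⁻¹ * ((2:ℝ)^j)⁻¹ ^ (β-1)) *
      ∫ ζ : ℝ, C_G (((2:ℝ)^j)⁻¹ * ζ) *
        (‖fhat ψ ζ‖ ^ 2 * |ζ| ^ (β-1)) := by
    intro j
    rw [hsigma2 j]
    exact aux_scale_real β C_G f_G (fun ζ => ‖fhat ψ ζ‖ ^ 2) hfG
      ((2:ℝ)^j) (h2j_pos j)
  have key2 : ∀ j : ℕ,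
      (∫ l : ℝ, Complex.exp (Complex.I * (((2 : ℝ) ^ j * t * l : ℝ) : ℂ)) *
        ((f_G l * ‖fhat ψ ((2 : ℝ) ^ j * l)‖ ^ 2 : ℝ) : ℂ))
      = ((((2:ℝ)^j)⁻¹ * ((2:ℝ)^j)⁻¹ ^ (β-1) : ℝ) : ℂ) *
        ∫ ζ : ℝ, Complex.exp (Complex.I * (t : ℂ) * (ζ : ℂ)) *
          ((C_G (((2:ℝ)^j)⁻¹ * ζ) *
            (‖fhat ψ ζ‖ ^ 2 * |ζ| ^ (β-1)) : ℝ) : ℂ) :=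
    fun j => aux_scale_complex β C_G f_G (fun ζ => ‖fhat ψ ζ‖ ^ 2) hfG
      ((2:ℝ)^j) t (h2j_pos j)
  have hc_pos : ∀ j : ℕ, (0:ℝ) < ((2:ℝ)^j)⁻¹ * ((2:ℝ)^j)⁻¹ ^ (β-1) := by
    intro j
    have := h2j_pos j
    have h1 : (0:ℝ) < ((2:ℝ)^j)⁻¹ := inv_pos.mpr this
    exact mul_pos h1 (Real.rpow_pos_of_pos h1 _)
  have hQ' : ∀ j : ℕ, Q j t =
      ((((∫ ζ : ℝ, C_G (((2:ℝ)^j)⁻¹ * ζ) *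
        (‖fhat ψ ζ‖ ^ 2 * |ζ| ^ (β-1)) : ℝ)) : ℂ))⁻¹ *
      ∫ ζ : ℝ, Complex.exp (Complex.I * (t : ℂ) * (ζ : ℂ)) *
          ((C_G (((2:ℝ)^j)⁻¹ * ζ) *
            (‖fhat ψ ζ‖ ^ 2 * |ζ| ^ (β-1)) : ℝ) : ℂ) := by
    intro j
    rw [hQ j t, key1 j, key2 j]
    exact aux_cancel _ _ _ (ne_of_gt (hc_pos j))
  constructor
  · -- imaginary part
    intro j
    have hexpn : ∀ x : ℝ, ‖Complex.exp (Complex.I * ((x : ℝ) : ℂ))‖ = 1 := by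
      intro x
      rw [Complex.norm_exp]
      norm_num [Complex.mul_re, Complex.mul_im]
    have hci : Integrable (fun l : ℝ =>
        Complex.exp (Complex.I * ((((2:ℝ)^j * t) * l : ℝ) : ℂ)) *
          ((f_G l * ‖fhat ψ ((2:ℝ)^j * l)‖ ^ 2 : ℝ) : ℂ)) := by
      apply Integrable.mono' (hfG_int.const_mul (K ^ 2 * B))
      · apply AEStronglyMeasurable.mul
        · apply Continuous.aestronglyMeasurable
          exact Complex.continuous_exp.comp (continuous_const.mul
            (Complex.continuous_ofReal.comp (continuous_const.mul continuous_id)))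
        · exact Complex.continuous_ofReal.comp_aestronglyMeasurable
            (hfG_int.aestronglyMeasurable.mul
              ((hF_cont.comp (continuous_const.mul continuous_id)).aestronglyMeasurable))
      · filter_upwards with l
        rw [norm_mul, hexpn, one_mul, Complex.norm_real,
          Real.norm_of_nonneg (mul_nonneg (hfG_nonneg l) (by positivity))]
        calc f_G l * ‖fhat ψ ((2:ℝ)^j * l)‖ ^ 2
            ≤ f_G l * (K ^ 2 * B) :=
              mul_le_mul_of_nonneg_left (hF_bd _) (hfG_nonneg l)
        _ = K ^ 2 * B * f_G l := by ring
    have hgev : ∀ᵐ l : ℝ, f_G (-l) * ‖fhat ψ ((2:ℝ)^j * (-l))‖ ^ 2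
        = f_G l * ‖fhat ψ ((2:ℝ)^j * l)‖ ^ 2 := by
      filter_upwards [aux_ae_ne_zero] with l hl
      rw [hfG (-l) (neg_ne_zero.mpr hl), hfG l hl, hCG_even, abs_neg,
        mul_neg, habs_even]
    have h0 : (∫ l : ℝ, Complex.exp (Complex.I * (((2 : ℝ) ^ j * t * l : ℝ) : ℂ)) *
        ((f_G l * ‖fhat ψ ((2 : ℝ) ^ j * l)‖ ^ 2 : ℝ) : ℂ)).im = 0 :=
      aux_im_zero ((2:ℝ)^j * t)
        (fun l => f_G l * ‖fhat ψ ((2:ℝ)^j * l)‖ ^ 2) hci hgev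
    rw [hQ j t, Complex.mul_im, h0, Complex.ofReal_im, Complex.ofReal_re]
    ring
  · -- convergence
    have hD_tend : Tendsto (fun j : ℕ => ∫ ζ : ℝ, C_G (((2:ℝ)^j)⁻¹ * ζ) *
        (‖fhat ψ ζ‖ ^ 2 * |ζ| ^ (β-1))) atTop
        (nhds (C_G 0 * ∫ ζ : ℝ, ‖fhat ψ ζ‖ ^ 2 * |ζ| ^ (β-1))) :=
      aux_tendsto_real C_G hCG_cont hCG_nonneg M hM _ hh_nonneg hh_cont hh_int
    have hE_tend : Tendsto (fun j : ℕ => ∫ ζ : ℝ,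
        Complex.exp (Complex.I * (t:ℂ) * (ζ:ℂ)) *
          ((C_G (((2:ℝ)^j)⁻¹ * ζ) *
            (‖fhat ψ ζ‖ ^ 2 * |ζ| ^ (β-1)) : ℝ) : ℂ)) atTop
        (nhds (((C_G 0 : ℝ) : ℂ) * ∫ ζ : ℝ,
          Complex.exp (Complex.I * (t:ℂ) * (ζ:ℂ)) *
            ((‖fhat ψ ζ‖ ^ 2 * |ζ| ^ (β-1) : ℝ) : ℂ))) :=
      aux_tendsto_complex C_G hCG_cont hCG_nonneg M hM _ hh_nonneg hh_cont hh_int t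
    have hlim_ne : (((C_G 0 * ∫ ζ : ℝ, ‖fhat ψ ζ‖ ^ 2 * |ζ| ^ (β-1) : ℝ)) : ℂ) ≠ 0 :=
      Complex.ofReal_ne_zero.mpr (ne_of_gt (mul_pos hCG0 hIh_pos))
    have hcomb := (((Complex.continuous_ofReal.tendsto _).comp hD_tend).inv₀ hlim_ne).mul hE_tend
    have heq : ((((C_G 0 * ∫ ζ : ℝ, ‖fhat ψ ζ‖ ^ 2 * |ζ| ^ (β-1) : ℝ)) : ℂ))⁻¹ *
        (((C_G 0 : ℝ) : ℂ) * ∫ ζ : ℝ,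
          Complex.exp (Complex.I * (t:ℂ) * (ζ:ℂ)) *
            ((‖fhat ψ ζ‖ ^ 2 * |ζ| ^ (β-1) : ℝ) : ℂ)) = ρ t := by
      rw [hρ t]
      have ha : (C_G 0 : ℝ) ≠ 0 := ne_of_gt hCG0
      push_cast [mul_inv]
      rw [mul_comm (((C_G 0 : ℝ)):ℂ)⁻¹ _, mul_assoc,
        ← mul_assoc ((((C_G 0 : ℝ)):ℂ))⁻¹, inv_mul_cancel₀ (by exact_mod_cast ha), one_mul]
    rw [← heq]
    exact Tendsto.congr (fun j => (hQ' j).symm) hcomb
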